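/- For a complex number z with \(|\arg z| < \pi\) and complex numbers \(\alpha, \beta\) with \(0 < \mathrm{Re}(\beta) < \mathrm{Re}(\alpha)\), we have \(\int_0^{\infty} \frac{t^{\beta}}{(t+z)^{\alpha}} \frac{dt}{t} = z^{\beta-\alpha} \cdot \frac{\Gamma(\alpha-\beta)\Gamma(\beta)}{\Gamma(\alpha)}\). -/

import Mathlib

open Complex MeasureTheory

namespace Stmt4Aux

open Complex MeasureTheory Set Filter Real


lemma integrable_aux {a b : ℝ} (ha : -1 < a) (hab : a + b < -1) :
    IntegrableOn (fun t : ℝ => t ^ a * (1 + t) ^ b) (Ioi 0) := by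
  have hb : b < 0 := by linarith
  have hmeas : ∀ s : Set ℝ, s ⊆ Ioi 0 → MeasurableSet s →
      AEStronglyMeasurable (fun t : ℝ => t ^ a * (1 + t) ^ b) (volume.restrict s) := by
    intro s hs hms
    refine (ContinuousOn.aestronglyMeasurable ?_ hms)
    refine ContinuousOn.mul ?_ ?_
    · exact fun t ht => (Real.continuousAt_rpow_const t a (Or.inl (ne_of_gt (hs ht)))).continuousWithinAt
    · intro t ht
      have ht0 : (0:ℝ) < t := hs ht
      exact ((continuous_const.add continuous_id).continuousWithinAt).rpow_const
        (Or.inl (by show (1:ℝ) + t ≠ 0; positivity))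
  have h1 : IntegrableOn (fun t : ℝ => t ^ a * (1 + t) ^ b) (Ioc 0 1) := by
    have hint : IntegrableOn (fun t : ℝ => t ^ a) (Ioc 0 1) := by
      have := (intervalIntegral.intervalIntegrable_rpow' (a := 0) (b := 1) ha)
      rwa [intervalIntegrable_iff_integrableOn_Ioc_of_le zero_le_one] at this
    refine hint.mono' (hmeas _ Ioc_subset_Ioi_self measurableSet_Ioc) ?_
    filter_upwards [ae_restrict_mem measurableSet_Ioc] with t ht
    have ht0 : 0 < t := ht.1
    have h1t : (0:ℝ) < 1 + t := by linarith
    rw [Real.norm_eq_abs, abs_mul, _root_.abs_of_nonneg (Real.rpow_nonneg ht0.le _),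
      _root_.abs_of_nonneg (Real.rpow_nonneg h1t.le _)]
    have : (1 + t) ^ b ≤ 1 := by
      have h := Real.rpow_le_rpow_of_exponent_le (x := 1 + t) (by linarith) hb.le
      rwa [Real.rpow_zero] at h
    calc t ^ a * (1 + t) ^ b ≤ t ^ a * 1 :=
          mul_le_mul_of_nonneg_left this (Real.rpow_nonneg ht0.le _)
      _ = t ^ a := mul_one _
  have h2 : IntegrableOn (fun t : ℝ => t ^ a * (1 + t) ^ b) (Ioi 1) := by
    have hint : IntegrableOn (fun t : ℝ => t ^ (a + b)) (Ioi 1) :=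
      integrableOn_Ioi_rpow_of_lt hab one_pos
    refine hint.mono' (hmeas _ (fun t (ht : t ∈ Ioi 1) => show (0:ℝ) < t from lt_trans one_pos ht) measurableSet_Ioi) ?_
    filter_upwards [ae_restrict_mem measurableSet_Ioi] with t ht
    have ht1 : (1:ℝ) < t := ht
    have ht0 : (0:ℝ) < t := lt_trans one_pos ht1
    have h1t : (0:ℝ) < 1 + t := by linarith
    rw [Real.norm_eq_abs, abs_mul, _root_.abs_of_nonneg (Real.rpow_nonneg ht0.le _),
      _root_.abs_of_nonneg (Real.rpow_nonneg h1t.le _), Real.rpow_add ht0]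
    refine mul_le_mul_of_nonneg_left ?_ (Real.rpow_nonneg ht0.le _)
    exact Real.rpow_le_rpow_of_nonpos ht0 (by linarith) hb.le
  have : Ioc (0:ℝ) 1 ∪ Ioi 1 = Ioi 0 := Ioc_union_Ioi_eq_Ioi zero_le_one
  rw [← this]
  exact h1.union h2



lemma add_mem_slitPlane {t : ℝ} (ht : 0 ≤ t) {z : ℂ} (hzs : z ∈ slitPlane) :
    (t : ℂ) + z ∈ slitPlane := by
  rw [Complex.mem_slitPlane_iff] at *
  rcases hzs with h | h
  · left; simp only [add_re, ofReal_re]; linarith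
  · right; simpa using h

lemma norm_cpow_le {x : ℂ} (hx : x ≠ 0) (w : ℂ) :
    ‖x ^ w‖ ≤ ‖x‖ ^ w.re * Real.exp (π * |w.im|) := by
  rw [Complex.norm_cpow_of_ne_zero hx, div_eq_mul_inv, ← Real.exp_neg]
  refine mul_le_mul_of_nonneg_left ?_ (Real.rpow_nonneg (norm_nonneg x) _)
  refine Real.exp_le_exp.2 ?_
  calc -(x.arg * w.im) ≤ |x.arg * w.im| := neg_le_abs _
    _ = |x.arg| * |w.im| := abs_mul _ _
    _ ≤ π * |w.im| := mul_le_mul_of_nonneg_right (Complex.abs_arg_le_pi x) (abs_nonneg _)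

lemma exists_lowerbound {z₀ : ℂ} {ε : ℝ} (hε : 0 < ε)
    (hball : Metric.closedBall z₀ ε ⊆ slitPlane) :
    ∃ c > 0, ∀ z ∈ Metric.closedBall z₀ ε, ∀ t : ℝ, 0 ≤ t →
      c * (1 + t) ≤ ‖(t : ℂ) + z‖ := by
  set M : ℝ := ‖z₀‖ + ε with hMdef
  have hM : 0 < M := by positivity
  set K : Set (ℝ × ℂ) := (Icc (0:ℝ) (2*M+1)) ×ˢ Metric.closedBall z₀ ε with hKdef
  have hKc : IsCompact K := isCompact_Icc.prod (isCompact_closedBall _ _)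
  have hKne : K.Nonempty := ⟨(0, z₀), by
    constructor
    · exact ⟨le_refl _, by simp; linarith⟩
    · simpa using hε.le⟩
  have hcont : ContinuousOn (fun p : ℝ × ℂ => ‖(p.1 : ℂ) + p.2‖) K :=
    (continuous_norm.comp
      ((Complex.continuous_ofReal.comp continuous_fst).add continuous_snd)).continuousOn
  obtain ⟨p₀, hp₀K, hp₀min⟩ := hKc.exists_isMinOn hKne hcont
  set d := ‖(p₀.1 : ℂ) + p₀.2‖ with hddef
  have hd : 0 < d := by
    refine norm_pos_iff.2 (slitPlane_ne_zero (add_mem_slitPlane hp₀K.1.1 (hball hp₀K.2)))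
  refine ⟨min (d / (2*M+2)) (1/2), by positivity, ?_⟩
  intro z hzB t ht
  have hzM : ‖z‖ ≤ M := by
    calc ‖z‖ = ‖z - z₀ + z₀‖ := by ring_nf
      _ ≤ ‖z - z₀‖ + ‖z₀‖ := norm_add_le _ _
      _ ≤ ε + ‖z₀‖ := by
          have := Metric.mem_closedBall.1 hzB
          rw [Complex.dist_eq] at this
          linarith
      _ = M := by rw [hMdef]; ring
  by_cases hcase : t ≤ 2*M+1
  · have hmem : ((t, z) : ℝ × ℂ) ∈ K := ⟨⟨ht, hcase⟩, hzB⟩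
    have hmin := hp₀min hmem
    calc min (d / (2*M+2)) (1/2) * (1 + t) ≤ d / (2*M+2) * (1 + t) :=
          mul_le_mul_of_nonneg_right (min_le_left _ _) (by linarith)
      _ ≤ d / (2*M+2) * (2*M+2) := by
          refine mul_le_mul_of_nonneg_left (by linarith) (by positivity)
      _ = d := by field_simp
      _ ≤ ‖(t : ℂ) + z‖ := hmin
  · push_neg at hcase
    have habs : t - ‖z‖ ≤ ‖(t : ℂ) + z‖ := by
      have h1 : ‖(t:ℂ)‖ - ‖-z‖ ≤ ‖(t:ℂ) - -z‖ := norm_sub_norm_le _ _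
      simp only [sub_neg_eq_add, norm_neg] at h1
      rwa [Complex.norm_real, Real.norm_eq_abs, _root_.abs_of_nonneg ht] at h1
    calc min (d / (2*M+2)) (1/2) * (1 + t) ≤ (1/2) * (1 + t) :=
          mul_le_mul_of_nonneg_right (min_le_right _ _) (by linarith)
      _ ≤ t - M := by linarith
      _ ≤ t - ‖z‖ := by linarith
      _ ≤ ‖(t : ℂ) + z‖ := habs



lemma base_case {α β : ℂ} (hβ : 0 < β.re) (hβα : β.re < α.re) :
    ∫ t in Ioi (0:ℝ), (t:ℂ) ^ (β - 1) * ((t:ℂ) + 1) ^ (-α)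
      = Gamma (α - β) * Gamma β / Gamma α := by
  have hαβ : 0 < (α - β).re := by rw [sub_re]; linarith
  have hα : 0 < α.re := lt_trans hβ hβα
  set f : ℝ → ℝ := fun t => (1 + t)⁻¹ with hfdef
  set g : ℝ → ℂ := fun x => (x:ℂ) ^ (α - β - 1) * (1 - (x:ℂ)) ^ (β - 1) with hgdef
  have himg : f '' Ioi 0 = Ioo 0 1 := by
    ext x
    constructor
    · rintro ⟨t, ht, rfl⟩
      have ht' : (0:ℝ) < t := ht
      refine ⟨by positivity, ?_⟩
      rw [hfdef]
      simp only
      rw [inv_lt_one_iff₀]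
      right; linarith
    · intro hx
      refine ⟨x⁻¹ - 1, ?_, ?_⟩
      · simp only [mem_Ioi, sub_pos]
        exact (one_lt_inv_iff₀).2 ⟨hx.1, hx.2⟩
      · rw [hfdef]
        simp only
        rw [add_sub_cancel, inv_inv]
  have hderiv : ∀ t ∈ Ioi (0:ℝ), HasDerivWithinAt f (-1 / (1 + t)^2) (Ioi 0) t := by
    intro t ht
    have ht' : (0:ℝ) < t := ht
    have h1 : HasDerivAt (fun t : ℝ => 1 + t) 1 t := (hasDerivAt_id t).const_add 1
    have h2 := h1.inv (by positivity)
    exact h2.hasDerivWithinAt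
  have hinj : InjOn f (Ioi 0) := by
    intro a _ b _ hab
    have := inv_injective hab
    linarith [this]
  have key := integral_image_eq_integral_abs_deriv_smul measurableSet_Ioi hderiv hinj g
  rw [himg] at key
  -- identify the RHS of key with our integral
  have hptwise : ∀ t ∈ Ioi (0:ℝ),
      |(-1 / (1 + t)^2)| • g (f t) = (t:ℂ) ^ (β - 1) * ((t:ℂ) + 1) ^ (-α) := by
    intro t ht
    have ht' : (0:ℝ) < t := ht
    have hu : (0:ℝ) < 1 + t := by linarith
    set u : ℂ := ((1 + t : ℝ) : ℂ) with hudef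
    have huC : u ≠ 0 := by rw [hudef]; simp only [ne_eq, ofReal_eq_zero]; positivity
    have harg : u.arg ≠ π := by
      rw [hudef, Complex.arg_ofReal_of_nonneg hu.le]
      exact (Real.pi_ne_zero).symm
    have hinv : ∀ w : ℂ, (((1 + t)⁻¹ : ℝ) : ℂ) ^ w = u ^ (-w) := by
      intro w
      rw [ofReal_inv, hudef, inv_cpow _ _ harg, ← cpow_neg]
    have hsc : ((|(-1 / (1 + t)^2)| : ℝ) : ℂ) = u ^ (-2 : ℂ) := by
      have habs : |(-1 / (1 + t)^2)| = 1 / (1 + t)^2 := by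
        rw [abs_div, abs_neg, abs_one, _root_.abs_of_nonneg (by positivity : (0:ℝ) ≤ (1+t)^2)]
      rw [habs, show (-2:ℂ) = -((2:ℕ):ℂ) by norm_num, cpow_neg, cpow_natCast, hudef]
      push_cast
      rw [one_div]
    have h1x : 1 - (((1+t)⁻¹ : ℝ) : ℂ) = ((t * (1+t)⁻¹ : ℝ) : ℂ) := by
      have hne : (1:ℂ) + (t:ℂ) ≠ 0 := by
        rw [hudef] at huC; push_cast at huC; exact huC
      push_cast
      field_simp
      ring
    have hf : f t = (1+t)⁻¹ := rfl
    rw [hf, hgdef]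
    simp only
    rw [h1x, ofReal_mul, mul_cpow_ofReal_nonneg ht'.le (by positivity), hinv, hinv]
    rw [real_smul, hsc]
    have hcol : u ^ (-2:ℂ) * (u ^ (-(α - β - 1)) *
        ((t:ℂ) ^ (β - 1) * u ^ (-(β - 1))))
        = (t:ℂ) ^ (β - 1) * u ^ (-α) := by
      rw [show u ^ (-α) = u ^ ((-2:ℂ) + (-(α - β - 1)) + (-(β - 1))) by
        congr 1; ring]
      rw [cpow_add _ _ huC, cpow_add _ _ huC]
      ring
    rw [hcol, hudef]
    push_cast
    rw [add_comm (1:ℂ) (t:ℂ)]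
  rw [MeasureTheory.setIntegral_congr_fun measurableSet_Ioi hptwise] at key
  -- relate to betaIntegral
  have hbeta : ∫ x in Ioo (0:ℝ) 1, g x = betaIntegral (α - β) β := by
    rw [betaIntegral, intervalIntegral.integral_of_le zero_le_one,
      integral_Ioc_eq_integral_Ioo]
  rw [hbeta] at key
  rw [← key]
  have hG := Gamma_mul_Gamma_eq_betaIntegral hαβ hβ
  rw [sub_add_cancel] at hG
  rw [hG]
  rw [mul_comm (Gamma α), mul_div_assoc, div_self (Gamma_ne_zero_of_re_pos hα), mul_one]



lemma scale {α β : ℂ} (x : ℝ) (hx : 0 < x) :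
    ∫ t in Ioi (0:ℝ), (t:ℂ) ^ (β - 1) * ((t:ℂ) + x) ^ (-α)
      = (x:ℂ) ^ (β - α) * ∫ t in Ioi (0:ℝ), (t:ℂ) ^ (β - 1) * ((t:ℂ) + 1) ^ (-α) := by
  set g : ℝ → ℂ := fun t => (t:ℂ) ^ (β - 1) * ((t:ℂ) + x) ^ (-α) with hgdef
  have hxC : (x:ℂ) ≠ 0 := ofReal_ne_zero.mpr hx.ne'
  have h := integral_comp_mul_left_Ioi g 0 hx
  rw [mul_zero] at h
  have h2 : ∫ t in Ioi (0:ℝ), g t = x • ∫ u in Ioi (0:ℝ), g (x * u) := by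
    rw [h, smul_smul, mul_inv_cancel₀ hx.ne', one_smul]
  have h3 : ∀ u ∈ Ioi (0:ℝ),
      g (x * u) = ((x:ℂ) ^ (β - 1) * (x:ℂ) ^ (-α)) *
        ((u:ℂ) ^ (β - 1) * ((u:ℂ) + 1) ^ (-α)) := by
    intro u hu
    have hu' : (0:ℝ) < u := hu
    rw [hgdef]
    simp only
    have e1 : ((x * u : ℝ) : ℂ) ^ (β - 1) = (x:ℂ) ^ (β - 1) * (u:ℂ) ^ (β - 1) := by
      rw [ofReal_mul, mul_cpow_ofReal_nonneg hx.le hu'.le]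
    have e2 : (((x * u : ℝ)) : ℂ) + (x:ℂ) = ((x * (u + 1) : ℝ) : ℂ) := by
      push_cast; ring
    rw [ofReal_mul] at e1 ⊢
    rw [show ((x:ℂ) * (u:ℂ) + (x:ℂ)) = ((x * (u+1) : ℝ) : ℂ) by push_cast; ring]
    rw [ofReal_mul, mul_cpow_ofReal_nonneg hx.le (by linarith : (0:ℝ) ≤ u + 1)]
    rw [e1]
    push_cast
    ring
  rw [MeasureTheory.setIntegral_congr_fun measurableSet_Ioi h3] at h2
  rw [MeasureTheory.integral_const_mul] at h2
  rw [h2, real_smul]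
  rw [show (β - α) = 1 + (β - 1) + (-α) by ring, cpow_add _ _ hxC, cpow_add _ _ hxC, cpow_one]
  ring




lemma ofReal_mem_slitPlane_of_pos {t : ℝ} (ht : 0 < t) : (t : ℂ) ∈ slitPlane := by
  rw [Complex.mem_slitPlane_iff]; left; simpa using ht

lemma contOn {α β : ℂ} {z : ℂ} (hzs : z ∈ slitPlane) :
    ContinuousOn (fun t : ℝ => (t:ℂ) ^ (β - 1) * ((t:ℂ) + z) ^ (-α)) (Ioi 0) := by
  intro t ht
  have ht' : (0:ℝ) < t := ht
  refine ContinuousWithinAt.mul ?_ ?_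
  · exact ((Complex.continuous_ofReal.continuousAt.cpow continuousAt_const
      (ofReal_mem_slitPlane_of_pos ht'))).continuousWithinAt
  · exact (((Complex.continuous_ofReal.continuousAt.add continuousAt_const).cpow
      continuousAt_const (add_mem_slitPlane ht'.le hzs))).continuousWithinAt

lemma F_differentiableAt {α β : ℂ} (hβ : 0 < β.re) (hβα : β.re < α.re) {z₀ : ℂ}
    (hz₀ : z₀ ∈ slitPlane) :
    DifferentiableAt ℂ
      (fun z => ∫ t in Ioi (0:ℝ), (t:ℂ) ^ (β - 1) * ((t:ℂ) + z) ^ (-α)) z₀ := by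
  have hα : 0 < α.re := lt_trans hβ hβα
  obtain ⟨ε, hε, hball⟩ : ∃ ε > 0, Metric.closedBall z₀ ε ⊆ slitPlane := by
    have := Metric.nhds_basis_closedBall.mem_iff.1 (isOpen_slitPlane.mem_nhds hz₀)
    obtain ⟨ε, hε, h⟩ := this
    exact ⟨ε, hε, h⟩
  obtain ⟨c, hc, hlow⟩ := exists_lowerbound hε hball
  set F : ℂ → ℝ → ℂ := fun z t => (t:ℂ) ^ (β - 1) * ((t:ℂ) + z) ^ (-α) with hFdef
  set F' : ℂ → ℝ → ℂ := fun z t => (t:ℂ) ^ (β - 1) * (-α * ((t:ℂ) + z) ^ (-α - 1)) with hF'def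
  have hmeasF : ∀ z ∈ Metric.closedBall z₀ ε,
      AEStronglyMeasurable (F z) (volume.restrict (Ioi 0)) := fun z hz =>
    (contOn (hball hz)).aestronglyMeasurable measurableSet_Ioi
  have habs : ∀ z ∈ Metric.closedBall z₀ ε, ∀ t : ℝ, 0 < t → ∀ w : ℂ,
      ‖((t:ℂ) + z) ^ w‖ ≤ (c * (1 + t)) ^ w.re * Real.exp (π * |w.im|) → True := fun _ _ _ _ _ _ => trivial
  -- bound for the norms of cpow of (t+z)
  have hkey : ∀ z ∈ Metric.closedBall z₀ ε, ∀ t : ℝ, 0 < t → ∀ w : ℂ, w.re ≤ 0 →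
      ‖((t:ℂ) + z) ^ w‖ ≤ c ^ w.re * (1 + t) ^ w.re * Real.exp (π * |w.im|) := by
    intro z hz t ht w hw
    have hne : (t:ℂ) + z ≠ 0 := slitPlane_ne_zero (add_mem_slitPlane ht.le (hball hz))
    refine le_trans (norm_cpow_le hne w) ?_
    refine mul_le_mul_of_nonneg_right ?_ (Real.exp_nonneg _)
    have h1 : (0:ℝ) < c * (1 + t) := by positivity
    have h2 := Real.rpow_le_rpow_of_nonpos h1 (hlow z hz t ht.le) hw
    calc ‖(t:ℂ) + z‖ ^ w.re ≤ (c * (1 + t)) ^ w.re := h2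
      _ = c ^ w.re * (1 + t) ^ w.re := Real.mul_rpow hc.le (by linarith)
  have hnorm_t : ∀ t : ℝ, 0 < t → ‖(t:ℂ) ^ (β - 1)‖ = t ^ (β.re - 1) := by
    intro t ht
    rw [Complex.norm_cpow_eq_rpow_re_of_pos ht]
    norm_num
  -- integrability of F z₀
  have hFint : Integrable (F z₀) (volume.restrict (Ioi 0)) := by
    set K : ℝ := c ^ (-α).re * Real.exp (π * |(-α).im|) with hKdef
    have hKpos : 0 ≤ K := by positivity
    have hbint : IntegrableOn (fun t : ℝ => K * (t ^ (β.re - 1) * (1 + t) ^ (-α.re)))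
        (Ioi 0) := by
      exact (integrable_aux (by linarith) (by linarith)).const_mul K
    refine hbint.mono' (hmeasF z₀ (Metric.mem_closedBall_self hε.le)) ?_
    filter_upwards [ae_restrict_mem measurableSet_Ioi] with t ht
    have ht' : (0:ℝ) < t := ht
    rw [hFdef]
    simp only [norm_mul]
    rw [hnorm_t t ht']
    have h := hkey z₀ (Metric.mem_closedBall_self hε.le) t ht' (-α) (by simp; linarith)
    have hre : (-α).re = -α.re := by simp
    rw [hre] at h
    calc t ^ (β.re - 1) * ‖((t:ℂ) + z₀) ^ (-α)‖
        ≤ t ^ (β.re - 1) * (c ^ (-α.re) * (1 + t) ^ (-α.re) * Real.exp (π * |(-α).im|)) := by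
          refine mul_le_mul_of_nonneg_left ?_ (Real.rpow_nonneg ht'.le _)
          simpa [hre] using h
      _ = K * (t ^ (β.re - 1) * (1 + t) ^ (-α.re)) := by
          rw [hKdef, hre]
          ring
  -- the bound for F'
  set K' : ℝ := ‖α‖ * (c ^ (-α.re - 1) * Real.exp (π * |(-α - 1).im|)) with hK'def
  set bound : ℝ → ℝ := fun t => K' * (t ^ (β.re - 1) * (1 + t) ^ (-α.re - 1)) with hbounddef
  have hbound_int : Integrable bound (volume.restrict (Ioi 0)) :=
    (integrable_aux (by linarith) (by linarith)).const_mul K'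
  have hF'meas : AEStronglyMeasurable (F' z₀) (volume.restrict (Ioi 0)) := by
    refine ContinuousOn.aestronglyMeasurable ?_ measurableSet_Ioi
    intro t ht
    have ht' : (0:ℝ) < t := ht
    refine ContinuousWithinAt.mul ?_ ?_
    · exact ((Complex.continuous_ofReal.continuousAt.cpow continuousAt_const
        (ofReal_mem_slitPlane_of_pos ht'))).continuousWithinAt
    · refine ContinuousWithinAt.mul continuousWithinAt_const ?_
      exact (((Complex.continuous_ofReal.continuousAt.add continuousAt_const).cpow
        continuousAt_const (add_mem_slitPlane ht'.le hz₀))).continuousWithinAt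
  have hbound_le : ∀ᵐ t ∂(volume.restrict (Ioi 0)), ∀ z ∈ Metric.ball z₀ ε,
      ‖F' z t‖ ≤ bound t := by
    filter_upwards [ae_restrict_mem measurableSet_Ioi] with t ht z hz
    have ht' : (0:ℝ) < t := ht
    have hz' : z ∈ Metric.closedBall z₀ ε := Metric.ball_subset_closedBall hz
    rw [hF'def]
    simp only [norm_mul, norm_neg]
    rw [hnorm_t t ht']
    have h := hkey z hz' t ht' (-α - 1) (by simp; linarith)
    have hre : (-α - 1).re = -α.re - 1 := by simp
    rw [hre] at h
    calc t ^ (β.re - 1) * (‖α‖ * ‖((t:ℂ) + z) ^ (-α - 1)‖)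
        ≤ t ^ (β.re - 1) * (‖α‖ *
            (c ^ (-α.re - 1) * (1 + t) ^ (-α.re - 1) * Real.exp (π * |(-α - 1).im|))) := by
          refine mul_le_mul_of_nonneg_left ?_ (Real.rpow_nonneg ht'.le _)
          exact mul_le_mul_of_nonneg_left h (norm_nonneg α)
      _ = bound t := by rw [hbounddef, hK'def]; ring
  have hderiv : ∀ᵐ t ∂(volume.restrict (Ioi 0)), ∀ z ∈ Metric.ball z₀ ε,
      HasDerivAt (fun z => F z t) (F' z t) z := by
    filter_upwards [ae_restrict_mem measurableSet_Ioi] with t ht z hz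
    have ht' : (0:ℝ) < t := ht
    have hz' : z ∈ Metric.closedBall z₀ ε := Metric.ball_subset_closedBall hz
    have h1 : HasDerivAt (fun z : ℂ => (t:ℂ) + z) 1 z := (hasDerivAt_id z).const_add _
    have h2 := h1.cpow_const (c := -α) (add_mem_slitPlane ht'.le (hball hz'))
    rw [mul_one] at h2
    have h3 := h2.const_mul ((t:ℂ) ^ (β - 1))
    simpa [hFdef, hF'def] using h3
  have hmeasFev : ∀ᶠ z in nhds z₀, AEStronglyMeasurable (F z) (volume.restrict (Ioi 0)) := by
    filter_upwards [Metric.closedBall_mem_nhds z₀ hε] with z hz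
    exact hmeasF z hz
  have := hasDerivAt_integral_of_dominated_loc_of_deriv_le (Metric.ball_mem_nhds z₀ hε) hmeasFev hFint hF'meas
    hbound_le hbound_int hderiv
  exact this.2.differentiableAt


end Stmt4Aux

theorem stmt4 (z α β : ℂ) (hz : z ≠ 0) (harg : Complex.arg z ≠ Real.pi)
    (hβ : 0 < β.re) (hβα : β.re < α.re) :
    ∫ t in Set.Ioi (0 : ℝ), ((t : ℂ) ^ β / ((t : ℂ) + z) ^ α) / (t : ℂ)
      = z ^ (β - α) * (Complex.Gamma (α - β) * Complex.Gamma β / Complex.Gamma α) := by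
  have hzs : z ∈ Complex.slitPlane := Complex.mem_slitPlane_iff_arg.2 ⟨harg, hz⟩
  set C : ℂ := Complex.Gamma (α - β) * Complex.Gamma β / Complex.Gamma α with hC
  set F : ℂ → ℂ := fun w => ∫ t in Set.Ioi (0:ℝ), (t:ℂ) ^ (β - 1) * ((t:ℂ) + w) ^ (-α) with hF
  set G : ℂ → ℂ := fun w => w ^ (β - α) * C with hG
  have hstep : ∫ t in Set.Ioi (0:ℝ), ((t:ℂ) ^ β / ((t:ℂ) + z) ^ α) / (t:ℂ) = F z := by
    refine MeasureTheory.setIntegral_congr_fun measurableSet_Ioi fun t ht => ?_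
    have ht' : (0:ℝ) < t := ht
    have htC : (t:ℂ) ≠ 0 := Complex.ofReal_ne_zero.mpr ht'.ne'
    rw [Complex.cpow_sub _ _ htC, Complex.cpow_one, Complex.cpow_neg]
    ring
  have hFan : AnalyticOnNhd ℂ F Complex.slitPlane := by
    refine DifferentiableOn.analyticOnNhd ?_ Complex.isOpen_slitPlane
    exact fun w hw => (Stmt4Aux.F_differentiableAt hβ hβα hw).differentiableWithinAt
  have hGan : AnalyticOnNhd ℂ G Complex.slitPlane := by
    refine DifferentiableOn.analyticOnNhd ?_ Complex.isOpen_slitPlane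
    intro w hw
    exact ((differentiableAt_id.cpow (differentiableAt_const _) hw).mul_const
      C).differentiableWithinAt
  have h1s : (1:ℂ) ∈ Complex.slitPlane := by
    rw [Complex.mem_slitPlane_iff]; left; norm_num
  have hpre : IsPreconnected Complex.slitPlane := by
    have : ContractibleSpace ↥Complex.slitPlane :=
      Complex.starConvex_one_slitPlane.contractibleSpace ⟨1, h1s⟩
    rw [isPreconnected_iff_preconnectedSpace]
    infer_instance
  have hreal : ∀ x : ℝ, 0 < x → F ((x : ℝ) : ℂ) = G ((x : ℝ) : ℂ) := by
    intro x hx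
    rw [hF, hG]
    simp only
    rw [Stmt4Aux.scale x hx, Stmt4Aux.base_case hβ hβα]
  have hfreq : ∃ᶠ w in nhdsWithin (1:ℂ) {(1:ℂ)}ᶜ, F w = G w := by
    have htend0 : Filter.Tendsto (fun n : ℕ => (1 + (1:ℝ)/(n+1))) Filter.atTop (nhds 1) := by
      have h0 : Filter.Tendsto (fun n : ℕ => (1:ℝ)/(n+1)) Filter.atTop (nhds 0) :=
        tendsto_one_div_add_atTop_nhds_zero_nat
      simpa using tendsto_const_nhds.add h0
    have htend : Filter.Tendsto (fun n : ℕ => ((1 + (1:ℝ)/(n+1) : ℝ) : ℂ)) Filter.atTop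
        (nhdsWithin (1:ℂ) {(1:ℂ)}ᶜ) := by
      refine tendsto_nhdsWithin_of_tendsto_nhds_of_eventually_within _ ?_ ?_
      · have h := (Complex.continuous_ofReal.tendsto (1:ℝ)).comp htend0
        rw [Complex.ofReal_one] at h
        exact h
      · refine Filter.Eventually.of_forall fun n => ?_
        simp only [Set.mem_compl_iff, Set.mem_singleton_iff]
        intro hcontra
        have h1 : (1 + (1:ℝ)/(n+1)) = 1 := by exact_mod_cast hcontra
        have hp : (0:ℝ) < 1/(n+1) := by positivity
        linarith
    exact htend.frequently (Filter.Eventually.frequently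
      (Filter.Eventually.of_forall fun n => hreal _ (by positivity)))
  have heq := hFan.eqOn_of_preconnected_of_frequently_eq hGan hpre h1s hfreq
  rw [hstep, heq hzs]
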